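/- arXiv:1809.06298 — 2 statements merged into one kernel-verified Lean document; each statement's English description precedes it below -/
import Mathlib

section
/- Let A be an n×n real matrix with nonnegative off-diagonal entries that is irreducible, and let τ > 0. Then every entry of exp(τA) is strictly positive. -/
open scoped Matrix
open NormedSpace

private lemma pow_entry_nonneg {n : ℕ} {B : Matrix (Fin n) (Fin n) ℝ}
    (hB : ∀ i j, 0 ≤ B i j) : ∀ (k : ℕ) (i j), 0 ≤ (B ^ k) i j := by
  intro k
  induction k with
  | zero => intro i j; simp [Matrix.one_apply]; split <;> norm_num
  | succ k ih =>
    intro i j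
    rw [pow_succ, Matrix.mul_apply]
    exact Finset.sum_nonneg fun m _ => mul_nonneg (ih i m) (hB m j)

private lemma pow_entry_pos {n : ℕ} {C B : Matrix (Fin n) (Fin n) ℝ}
    (h1 : ∀ i j, 0 ≤ B i j)
    (h2 : ∀ i j, i ≠ j → C i j ≠ 0 → 0 < B i j)
    (h3 : ∀ i, 0 < B i i) :
    ∀ (k : ℕ) (i j), (C ^ k) i j ≠ 0 → 0 < (B ^ k) i j := by
  intro k
  induction k with
  | zero =>
    intro i j h
    simp only [pow_zero, Matrix.one_apply] at h ⊢
    by_cases hij : i = j <;> simp [hij] at h ⊢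
  | succ k ih =>
    intro i j h
    rw [pow_succ, Matrix.mul_apply] at h
    obtain ⟨m, -, hm⟩ := Finset.exists_ne_zero_of_sum_ne_zero h
    have hCk : (C ^ k) i m ≠ 0 := fun h0 => hm (by simp [h0])
    have hC : C m j ≠ 0 := fun h0 => hm (by simp [h0])
    have hBmj : 0 < B m j := by
      by_cases hmj : m = j
      · subst hmj; exact h3 m
      · exact h2 m j hmj hC
    rw [pow_succ, Matrix.mul_apply]
    refine Finset.sum_pos' (fun x _ => mul_nonneg (pow_entry_nonneg h1 k i x) (h1 x j)) ⟨m, Finset.mem_univ m, mul_pos (ih i m hCk) hBmj⟩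

theorem stmt_4 {n : ℕ} (A : Matrix (Fin n) (Fin n) ℝ) (τ : ℝ) (hτ : 0 < τ)
    (hoffdiag : ∀ i j, i ≠ j → 0 ≤ A i j)
    (hirr : ∀ i j, i ≠ j → ∃ k : ℕ, 1 ≤ k ∧ (A ^ k) i j ≠ 0) :
    ∀ i j, 0 < (NormedSpace.exp (τ • A)) i j := by
  classical
  set c : ℝ := 1 + ∑ i, |τ * A i i| with hc
  set C : Matrix (Fin n) (Fin n) ℝ := τ • A with hC
  set B : Matrix (Fin n) (Fin n) ℝ := C + Matrix.diagonal (fun _ => c) with hB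
  -- basic entry facts about B
  have hsum_abs : ∀ i : Fin n, |τ * A i i| ≤ ∑ i', |τ * A i' i'| := fun i =>
    Finset.single_le_sum (f := fun i' => |τ * A i' i'|) (fun i' _ => abs_nonneg _) (Finset.mem_univ i)
  have hdiag : ∀ i, 0 < B i i := by
    intro i
    have : -(τ * A i i) ≤ |τ * A i i| := neg_le_abs _
    simp only [hB, hC, Matrix.add_apply, Matrix.smul_apply, Matrix.diagonal_apply_eq,
      smul_eq_mul, hc]
    have := hsum_abs i
    nlinarith [neg_abs_le (τ * A i i)]
  have h1 : ∀ i j, 0 ≤ B i j := by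
    intro i j
    by_cases hij : i = j
    · exact (hdiag i).le.trans_eq (by rw [hij])
    · simp only [hB, hC, Matrix.add_apply, Matrix.smul_apply, Matrix.diagonal_apply_ne _ hij,
        smul_eq_mul, add_zero]
      exact mul_nonneg hτ.le (hoffdiag i j hij)
  have h2 : ∀ i j, i ≠ j → C i j ≠ 0 → 0 < B i j := by
    intro i j hij hne
    have : B i j = C i j := by
      simp [hB, Matrix.diagonal_apply_ne _ hij]
    rw [this]
    have : 0 ≤ C i j := by
      simpa [hC] using mul_nonneg hτ.le (hoffdiag i j hij)
    exact lt_of_le_of_ne this (Ne.symm hne)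
  -- every pair has some k with (B^k) i j > 0
  have hBpos : ∀ i j, ∃ k, 0 < (B ^ k) i j := by
    intro i j
    by_cases hij : i = j
    · exact ⟨0, by subst hij; simp [Matrix.one_apply]⟩
    · obtain ⟨k, -, hk⟩ := hirr i j hij
      refine ⟨k, pow_entry_pos h1 h2 hdiag k i j ?_⟩
      have : (C ^ k) i j = τ ^ k * (A ^ k) i j := by
        rw [hC, smul_pow]; simp
      rw [this]
      exact mul_ne_zero (pow_ne_zero _ hτ.ne') hk
  -- exp decomposition
  letI : SeminormedRing (Matrix (Fin n) (Fin n) ℝ) := Matrix.linftyOpSemiNormedRing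
  letI : NormedRing (Matrix (Fin n) (Fin n) ℝ) := Matrix.linftyOpNormedRing
  letI : NormedAlgebra ℝ (Matrix (Fin n) (Fin n) ℝ) := Matrix.linftyOpNormedAlgebra
  have hsplit : C = B + Matrix.diagonal (fun _ => -c) := by
    simp [hB]
    ext i j
    by_cases hij : i = j <;> simp [Matrix.add_apply, Matrix.diagonal, hij]
  have hcomm : Commute B (Matrix.diagonal fun _ : Fin n => (-c : ℝ)) := by
    have : Matrix.diagonal (fun _ : Fin n => (-c : ℝ)) = (-c) • (1 : Matrix (Fin n) (Fin n) ℝ) := by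
      ext i j; by_cases hij : i = j <;> simp [Matrix.diagonal, hij, Matrix.one_apply]
    rw [this]
    exact (Commute.one_right B).smul_right _
  have hpi : exp (fun _ : Fin n => (-c : ℝ)) = fun _ : Fin n => Real.exp (-c) := by
    have := map_exp (Pi.constRingHom (Fin n) ℝ) (continuous_pi fun _ => continuous_id) (-c)
    simp only [Pi.constRingHom] at this
    rw [Real.exp_eq_exp_ℝ]
    exact this.symm
  have hexp : exp C = exp B * Matrix.diagonal (fun _ : Fin n => Real.exp (-c)) := by
    rw [hsplit, Matrix.exp_add_of_commute B _ hcomm, Matrix.exp_diagonal, hpi]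
  intro i j
  rw [show exp (τ • A) = exp C from rfl, hexp, Matrix.mul_diagonal]
  refine mul_pos ?_ (Real.exp_pos _)
  -- positivity of exp B entries
  have hsummable : Summable fun k : ℕ => ((Nat.factorial k : ℝ))⁻¹ • B ^ k := expSeries_summable' B
  have hsum1 : Summable fun k : ℕ => (((Nat.factorial k : ℝ))⁻¹ • B ^ k) i :=
    (Pi.summable.mp hsummable) i
  have hsum2 : Summable fun k : ℕ => (((Nat.factorial k : ℝ))⁻¹ • B ^ k) i j :=
    (Pi.summable.mp hsum1) j
  have hentry : (exp B) i j = ∑' k : ℕ, (((Nat.factorial k : ℝ))⁻¹ • B ^ k) i j := by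
    simp only [exp_eq_tsum ℝ]
    erw [tsum_apply hsummable, tsum_apply hsum1]
  rw [hentry]
  obtain ⟨k0, hk0⟩ := hBpos i j
  refine Summable.tsum_pos hsum2 (fun k => ?_) k0 ?_
  · simp only [Matrix.smul_apply, smul_eq_mul]
    exact mul_nonneg (by positivity) (pow_entry_nonneg h1 k i j)
  · simp only [Matrix.smul_apply, smul_eq_mul]
    exact mul_pos (by positivity) hk0
end

section
/- For every symmetric positive definite 2×2 real matrix W there exists a superbase (e₀, e₁, e₂) of ℤ² (i.e., e_i ∈ ℤ², e₀+e₁+e₂=0, |det(e₁,e₂)|=1) which is W-obtuse: ⟨e_i, W e_j⟩ ≤ 0 for all i ≠ j. -/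
open Matrix

/-- Real vector associated to an integer vector in ℤ². -/
def toReal2 (e : Fin 2 → ℤ) : Fin 2 → ℝ := fun j => (e j : ℝ)

noncomputable def Bf (W : Matrix (Fin 2) (Fin 2) ℝ) (u v : Fin 2 → ℤ) : ℝ :=
  toReal2 u ⬝ᵥ W.mulVec (toReal2 v)

noncomputable def Ef (W : Matrix (Fin 2) (Fin 2) ℝ) (p : (Fin 2 → ℤ) × (Fin 2 → ℤ)) : ℝ :=
  Bf W p.1 p.1 + Bf W p.2 p.2 + Bf W (p.1 + p.2) (p.1 + p.2)

lemma Bf_expand (W : Matrix (Fin 2) (Fin 2) ℝ) (u v : Fin 2 → ℤ) :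
    Bf W u v = W 0 0 * (u 0 * v 0) + W 0 1 * (u 0 * v 1) + W 1 0 * (u 1 * v 0)
      + W 1 1 * (u 1 * v 1) := by
  simp [Bf, toReal2, dotProduct, Matrix.mulVec, Fin.sum_univ_two]
  ring

lemma step1 (W : Matrix (Fin 2) (Fin 2) ℝ) (h10 : W 1 0 = W 0 1) (a b : Fin 2 → ℤ) :
    Ef W (-a, b) = Ef W (a, b) - 4 * Bf W a b := by
  simp only [Ef, Bf_expand, Pi.add_apply, Pi.neg_apply]
  push_cast
  rw [h10]; ring

lemma step2 (W : Matrix (Fin 2) (Fin 2) ℝ) (h10 : W 1 0 = W 0 1) (a b : Fin 2 → ℤ) :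
    Ef W (-a, -(a+b)) = Ef W (a, b) - 4 * Bf W (-(a+b)) a := by
  simp only [Ef, Bf_expand, Pi.add_apply, Pi.neg_apply]
  push_cast
  rw [h10]; ring

lemma step3 (W : Matrix (Fin 2) (Fin 2) ℝ) (h10 : W 1 0 = W 0 1) (a b : Fin 2 → ℤ) :
    Ef W (-b, -(a+b)) = Ef W (a, b) - 4 * Bf W (-(a+b)) b := by
  simp only [Ef, Bf_expand, Pi.add_apply, Pi.neg_apply]
  push_cast
  rw [h10]; ring

lemma finite_ball (N : ℤ) : {v : Fin 2 → ℤ | |v 0| ≤ N ∧ |v 1| ≤ N}.Finite := by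
  have hsub : {v : Fin 2 → ℤ | |v 0| ≤ N ∧ |v 1| ≤ N} ⊆
      (fun p : ℤ × ℤ => ![p.1, p.2]) '' (Set.Icc (-N) N ×ˢ Set.Icc (-N) N) := by
    rintro v ⟨h0, h1⟩
    refine ⟨(v 0, v 1), ⟨⟨neg_le_of_abs_le h0, le_of_abs_le h0⟩,
      ⟨neg_le_of_abs_le h1, le_of_abs_le h1⟩⟩, ?_⟩
    funext i; fin_cases i <;> rfl
  exact (((Set.finite_Icc _ _).prod (Set.finite_Icc _ _)).image _).subset hsub

lemma int_abs_le_sq (x : ℤ) : |x| ≤ x ^ 2 := by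
  rcases eq_or_ne x 0 with h | h
  · simp [h]
  · have h1 : 1 ≤ |x| := Int.one_le_abs h
    nlinarith [sq_abs x, abs_nonneg x]

lemma Bf_nonneg (W : Matrix (Fin 2) (Fin 2) ℝ) (hWpd : W.PosDef) (v : Fin 2 → ℤ) :
    0 ≤ Bf W v v := by
  have := hWpd.posSemidef.dotProduct_mulVec_nonneg (toReal2 v)
  simpa [Bf] using this

lemma comp_bound (W : Matrix (Fin 2) (Fin 2) ℝ) (h10 : W 1 0 = W 0 1) (hWpd : W.PosDef)
    (C : ℝ) (v : Fin 2 → ℤ) (hq : Bf W v v ≤ C) :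
    |v 0| ≤ ⌈(W 0 0 + W 1 1) * C / (W 0 0 * W 1 1 - W 0 1 * W 1 0)⌉ ∧
    |v 1| ≤ ⌈(W 0 0 + W 1 1) * C / (W 0 0 * W 1 1 - W 0 1 * W 1 0)⌉ := by
  have hd : 0 < W 0 0 * W 1 1 - W 0 1 * W 1 0 := by
    have := hWpd.det_pos; rwa [Matrix.det_fin_two] at this
  have h00 : 0 < W 0 0 := by
    have := hWpd.dotProduct_mulVec_pos (x := ![1,0]) (by intro h; have := congrFun h 0; simp at this)
    simpa [dotProduct, Matrix.mulVec, Fin.sum_univ_two] using this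
  have h11 : 0 < W 1 1 := by
    have := hWpd.dotProduct_mulVec_pos (x := ![0,1]) (by intro h; have := congrFun h 1; simp at this)
    simpa [dotProduct, Matrix.mulVec, Fin.sum_univ_two] using this
  have hC : 0 ≤ C := le_trans (Bf_nonneg W hWpd v) hq
  rw [Bf_expand] at hq
  set x : ℝ := (v 0 : ℝ)
  set y : ℝ := (v 1 : ℝ)
  rw [h10] at hq
  have hd' := hd
  rw [h10] at hd'
  have hx : x ^ 2 ≤ (W 0 0 + W 1 1) * C / (W 0 0 * W 1 1 - W 0 1 * W 1 0) := by
    rw [h10, le_div_iff₀ hd']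
    nlinarith [sq_nonneg (W 1 1 * y + W 0 1 * x), mul_nonneg h00.le hC,
      mul_le_mul_of_nonneg_left hq h11.le]
  have hy : y ^ 2 ≤ (W 0 0 + W 1 1) * C / (W 0 0 * W 1 1 - W 0 1 * W 1 0) := by
    rw [h10, le_div_iff₀ hd']
    nlinarith [sq_nonneg (W 0 0 * x + W 0 1 * y), mul_nonneg h11.le hC,
      mul_le_mul_of_nonneg_left hq h00.le]
  constructor
  · refine le_trans (int_abs_le_sq _) ?_
    have : ((v 0 : ℤ) ^ 2 : ℝ) ≤ (⌈(W 0 0 + W 1 1) * C / (W 0 0 * W 1 1 - W 0 1 * W 1 0)⌉ : ℝ) :=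
      le_trans (by push_cast; exact hx) (Int.le_ceil _)
    exact_mod_cast this
  · refine le_trans (int_abs_le_sq _) ?_
    have : ((v 1 : ℤ) ^ 2 : ℝ) ≤ (⌈(W 0 0 + W 1 1) * C / (W 0 0 * W 1 1 - W 0 1 * W 1 0)⌉ : ℝ) :=
      le_trans (by push_cast; exact hy) (Int.le_ceil _)
    exact_mod_cast this

theorem stmt_12 (W : Matrix (Fin 2) (Fin 2) ℝ) (hW : W.IsSymm) (hWpd : W.PosDef) :
    ∃ e₀ e₁ e₂ : Fin 2 → ℤ,
      e₀ + e₁ + e₂ = 0 ∧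
      |e₁ 0 * e₂ 1 - e₁ 1 * e₂ 0| = 1 ∧
      toReal2 e₀ ⬝ᵥ W.mulVec (toReal2 e₁) ≤ 0 ∧
      toReal2 e₀ ⬝ᵥ W.mulVec (toReal2 e₂) ≤ 0 ∧
      toReal2 e₁ ⬝ᵥ W.mulVec (toReal2 e₂) ≤ 0 := by
  have h10 : W 1 0 = W 0 1 := by
    have := hW; rw [Matrix.IsSymm] at this
    exact (congrFun (congrFun this 0) 1).symm ▸ rfl
  set p₀ : (Fin 2 → ℤ) × (Fin 2 → ℤ) := (![1,0], ![0,1]) with hp₀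
  set E₀ : ℝ := Ef W p₀ with hE₀
  set N : ℤ := ⌈(W 0 0 + W 1 1) * E₀ / (W 0 0 * W 1 1 - W 0 1 * W 1 0)⌉ with hN
  set S : Set ((Fin 2 → ℤ) × (Fin 2 → ℤ)) :=
    {p | |p.1 0 * p.2 1 - p.1 1 * p.2 0| = 1 ∧ Ef W p ≤ E₀} with hS
  -- S is finite
  have hSfin : S.Finite := by
    have hsub : S ⊆ ({v : Fin 2 → ℤ | |v 0| ≤ N ∧ |v 1| ≤ N} ×ˢ
        {v : Fin 2 → ℤ | |v 0| ≤ N ∧ |v 1| ≤ N}) := by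
      rintro ⟨a, b⟩ ⟨-, hE⟩
      have ha : Bf W a a ≤ E₀ := by
        have h1 := Bf_nonneg W hWpd b
        have h2 := Bf_nonneg W hWpd (a + b)
        simp only [Ef] at hE; linarith
      have hb : Bf W b b ≤ E₀ := by
        have h1 := Bf_nonneg W hWpd a
        have h2 := Bf_nonneg W hWpd (a + b)
        simp only [Ef] at hE; linarith
      exact ⟨comp_bound W h10 hWpd E₀ a ha, comp_bound W h10 hWpd E₀ b hb⟩
    exact ((finite_ball N).prod (finite_ball N)).subset hsub
  have hp₀S : p₀ ∈ S := by
    constructor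
    · simp [hp₀]
    · exact le_refl E₀
  -- take a minimizer of Ef over S
  obtain ⟨p, hpS, hpmin⟩ := hSfin.toFinset.exists_min_image (Ef W)
    ⟨p₀, hSfin.mem_toFinset.mpr hp₀S⟩
  rw [Set.Finite.mem_toFinset] at hpS
  have hpmin' : ∀ q ∈ S, Ef W p ≤ Ef W q := fun q hq =>
    hpmin q (hSfin.mem_toFinset.mpr hq)
  obtain ⟨a, b⟩ := p
  obtain ⟨hdet, hE⟩ := hpS
  -- the three obtuseness conditions
  have hab : Bf W a b ≤ 0 := by
    by_contra h
    push_neg at h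
    have hnew : Ef W (-a, b) = Ef W (a, b) - 4 * Bf W a b := step1 W h10 a b
    have hmem : (-a, b) ∈ S := by
      refine ⟨?_, ?_⟩
      · show |(-a) 0 * b 1 - (-a) 1 * b 0| = 1
        have : (-a) 0 * b 1 - (-a) 1 * b 0 = -(a 0 * b 1 - a 1 * b 0) := by
          simp [Pi.neg_apply]; ring
        rw [this, abs_neg]; exact hdet
      · rw [hnew]; linarith
    have := hpmin' _ hmem
    rw [hnew] at this; linarith
  have hca : Bf W (-(a+b)) a ≤ 0 := by
    by_contra h
    push_neg at h
    have hnew : Ef W (-a, -(a+b)) = Ef W (a, b) - 4 * Bf W (-(a+b)) a := step2 W h10 a b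
    have hmem : (-a, -(a+b)) ∈ S := by
      refine ⟨?_, ?_⟩
      · show |(-a) 0 * (-(a+b)) 1 - (-a) 1 * (-(a+b)) 0| = 1
        have : (-a) 0 * (-(a+b)) 1 - (-a) 1 * (-(a+b)) 0 = a 0 * b 1 - a 1 * b 0 := by
          simp [Pi.neg_apply, Pi.add_apply]; ring
        rw [this]; exact hdet
      · rw [hnew]; linarith
    have := hpmin' _ hmem
    rw [hnew] at this; linarith
  have hcb : Bf W (-(a+b)) b ≤ 0 := by
    by_contra h
    push_neg at h
    have hnew : Ef W (-b, -(a+b)) = Ef W (a, b) - 4 * Bf W (-(a+b)) b := step3 W h10 a b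
    have hmem : (-b, -(a+b)) ∈ S := by
      refine ⟨?_, ?_⟩
      · show |(-b) 0 * (-(a+b)) 1 - (-b) 1 * (-(a+b)) 0| = 1
        have : (-b) 0 * (-(a+b)) 1 - (-b) 1 * (-(a+b)) 0 = -(a 0 * b 1 - a 1 * b 0) := by
          simp [Pi.neg_apply, Pi.add_apply]; ring
        rw [this, abs_neg]; exact hdet
      · rw [hnew]; linarith
    have := hpmin' _ hmem
    rw [hnew] at this; linarith
  refine ⟨-(a+b), a, b, by ring, hdet, hca, hcb, hab⟩
end
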